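/- On the line bundle $L$, the multiplication $[a,s,x]\cdot[b,t,y]:=[ab,st,y]$, defined when $\theta_t(y)=x$, is well-defined (independent of representatives), and satisfies $\|[a,s,x]\cdot[b,t,y]\|=\|[a,s,x]\|\,\|[b,t,y]\|$ where $\|[a,s,x]\|=\sqrt{(a^*a)(x)}$. -/

import Mathlib

/-- An inverse semigroup: a semigroup with an involution `star` such that `s (star s) s = s`,
`(star s) s (star s) = star s`, and idempotents commute (this forces `star s` to be the
unique generalized inverse of `s`). -/
class InverseSemigroup (S : Type*) extends Semigroup S, Star S where
  mul_star_mul : ∀ s : S, s * star s * s = s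
  star_mul_star : ∀ s : S, star s * s * star s = star s
  idem_comm : ∀ e f : S, e * e = e → f * f = f → e * f = f * e

/-- The natural partial order on an inverse semigroup: `s ≤ t` iff `s = t (star s) s`. -/
def ISle {S : Type*} [InverseSemigroup S] (s t : S) : Prop := t * (star s * s) = s

/-- A (concrete) Fell bundle over an inverse semigroup `S`: a family of closed subspaces
`fib s` of a C*-algebra `A`, with `fib s * fib t ⊆ fib (s t)`, `(fib s)* ⊆ fib (star s)`,
and `fib s ⊆ fib t` whenever `s ≤ t`.  (The fibers are thus Banach spaces with a
bilinear associative multiplication `𝒜ₛ × 𝒜ₜ → 𝒜ₛₜ`, a conjugate-linear involution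
`𝒜ₛ → 𝒜ₛ*`, isometric inclusions, and the C*-identities hold in `A`.) -/
structure FellBundle (S : Type*) [InverseSemigroup S] (A : Type*)
    [NormedRing A] [StarRing A] [NormedAlgebra ℂ A] where
  fib : S → Submodule ℂ A
  isClosed_fib : ∀ s, IsClosed (fib s : Set A)
  mul_mem : ∀ {s t : S} {a b : A}, a ∈ fib s → b ∈ fib t → a * b ∈ fib (s * t)
  star_mem : ∀ {s : S} {a : A}, a ∈ fib s → star a ∈ fib (star s)
  incl : ∀ {s t : S}, ISle s t → fib s ≤ fib t

variable {S : Type*} [InverseSemigroup S]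
variable {A : Type*} [NormedRing A] [StarRing A] [CStarRing A]
  [NormedAlgebra ℂ A] [StarModule ℂ A] [CompleteSpace A]

/-- A Fell bundle is semi-abelian if each fiber over an idempotent is commutative. -/
def FellBundle.SemiAbelian (𝓑 : FellBundle S A) : Prop :=
  ∀ e : S, e * e = e → ∀ a b : A, a ∈ 𝓑.fib e → b ∈ 𝓑.fib e → a * b = b * a

/-- A Fell bundle is saturated if `fib (s t)` is the closed linear span of
`fib s * fib t`. -/
def FellBundle.Saturated (𝓑 : FellBundle S A) : Prop :=
  ∀ s t : S, (𝓑.fib (s * t) : Set A) ⊆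
    closure (↑(Submodule.span ℂ {x : A | ∃ a ∈ 𝓑.fib s, ∃ b ∈ 𝓑.fib t, x = a * b}) : Set A)

/-- The "restriction to the idempotent semilattice" part of the bundle: the closed linear
span of the fibers over idempotents, a concrete model for `C*(𝓔)`. -/
def FellBundle.EPart (𝓑 : FellBundle S A) : Set A :=
  closure (↑(Submodule.span ℂ (⋃ e ∈ {e : S | e * e = e}, (𝓑.fib e : Set A))) : Set A)

/-- The open support `𝒰ₑ ⊆ X` of the ideal `𝒜ₑ = C₀(𝒰ₑ)`, expressed via the Gelfand
transform `val` of the idempotent part. -/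
def FellBundle.U (𝓑 : FellBundle S A) {X : Type*} (val : A → X → ℂ) (e : S) : Set X :=
  {x : X | ∃ b ∈ 𝓑.fib e, val b x ≠ 0}

/-- The equivalence relation of Definition 3.9 on triples `(a, s, x)`:
`(a,s,x) ∼ (a',s',x')` iff `x = x'` and there are an idempotent `e` and `b ∈ 𝒜ₑ` with
`b(x) ≠ 0`, `s e = s' e` and `a b ≡ₓ a' b`.  Its classes are the elements of the Fell
line bundle `L` over the groupoid of germs `𝒢`. -/
def germRelTrip {S : Type*} [InverseSemigroup S] {A : Type*} [NormedRing A] [StarRing A]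
    [NormedAlgebra ℂ A] (𝓑 : FellBundle S A) {X : Type*} (val : A → X → ℂ) :
    (A × S × X) → (A × S × X) → Prop :=
  fun p q => p.2.2 = q.2.2 ∧ ∃ (e : S) (b : A), e * e = e ∧ b ∈ 𝓑.fib e ∧
    val b p.2.2 ≠ 0 ∧ p.2.1 * e = q.2.1 * e ∧
    val (star (p.1 * b - q.1 * b) * (p.1 * b - q.1 * b)) p.2.2 = 0

namespace InverseSemigroup
variable {S : Type*} [InverseSemigroup S]

theorem is_unique_inv (s x y : S) (hx1 : s * x * s = s) (hx2 : x * s * x = x)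
    (hy1 : s * y * s = s) (hy2 : y * s * y = y) : x = y := by
  have hxs : (s * x) * (s * x) = s * x := by
    have := congrArg (· * x) hx1
    simp only [mul_assoc] at this ⊢; rw [this]
  have hsx : (x * s) * (x * s) = x * s := by
    have := congrArg (· * s) hx2
    simp only [mul_assoc] at this ⊢; rw [this]
  have hys : (s * y) * (s * y) = s * y := by
    have := congrArg (· * y) hy1
    simp only [mul_assoc] at this ⊢; rw [this]
  have hsy : (y * s) * (y * s) = y * s := by
    have := congrArg (· * s) hy2
    simp only [mul_assoc] at this ⊢; rw [this]
  have hA : x * (s * x) = x := by rw [← mul_assoc]; exact hx2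
  have hAy : y * (s * y) = y := by rw [← mul_assoc]; exact hy2
  have hB : s * (y * (s * x)) = s * x := by
    rw [show s * (y * (s * x)) = ((s * y) * s) * x by simp only [mul_assoc], hy1]
  have hBy : s * (x * (s * y)) = s * y := by
    rw [show s * (x * (s * y)) = ((s * x) * s) * y by simp only [mul_assoc], hx1]
  -- claim2 : x = x * (s * y)
  have claim2 : x = x * (s * y) := by
    have hcomm2 : (s * y) * (s * x) = (s * x) * (s * y) := idem_comm _ _ hys hxs
    calc x = x * (s * x) := hA.symm
    _ = x * (s * (y * (s * x))) := by rw [hB]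
    _ = x * ((s * y) * (s * x)) := by simp only [mul_assoc]
    _ = x * ((s * x) * (s * y)) := by rw [hcomm2]
    _ = (x * (s * x)) * (s * y) := by simp only [mul_assoc]
    _ = x * (s * y) := by rw [hA]
  -- claim2' : y = y * (s * x), by symmetry
  have claim2' : y = y * (s * x) := by
    have hcomm2 : (s * x) * (s * y) = (s * y) * (s * x) := idem_comm _ _ hxs hys
    calc y = y * (s * y) := hAy.symm
    _ = y * (s * (x * (s * y))) := by rw [hBy]
    _ = y * ((s * x) * (s * y)) := by simp only [mul_assoc]
    _ = y * ((s * y) * (s * x)) := by rw [hcomm2]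
    _ = (y * (s * y)) * (s * x) := by simp only [mul_assoc]
    _ = y * (s * x) := by rw [hAy]
  -- claim1 : x = y * (s * x)
  have claim1 : x = y * (s * x) := by
    have hcomm1 : (x * s) * (y * s) = (y * s) * (x * s) := idem_comm _ _ hsx hsy
    have hcomm1' : x * (s * (y * (s * x))) = y * (s * (x * (s * x))) := by
      have := congrArg (· * x) hcomm1
      simpa only [mul_assoc] using this
    calc x = x * (s * x) := hA.symm
    _ = x * (s * (y * (s * x))) := by rw [hB]
    _ = y * (s * (x * (s * x))) := hcomm1'
    _ = y * (s * x) := by rw [hA]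
  exact claim1.trans claim2'.symm

theorem is_star_star (s : S) : star (star s) = s :=
  is_unique_inv (star s) (star (star s)) s (mul_star_mul (star s))
    (star_mul_star (star s)) (star_mul_star s) (mul_star_mul s)

theorem idem_star_mul (s : S) : (star s * s) * (star s * s) = star s * s := by
  rw [show (star s * s) * (star s * s) = star s * ((s * star s) * s) by simp only [mul_assoc],
    mul_star_mul]

theorem idem_mul_star (s : S) : (s * star s) * (s * star s) = s * star s := by
  rw [show (s * star s) * (s * star s) = s * ((star s * s) * star s) by simp only [mul_assoc],
    star_mul_star]

theorem is_star_mul (s t : S) : star (s * t) = star t * star s := by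
  refine (is_unique_inv (s * t) (star (s * t)) (star t * star s) (mul_star_mul _)
    (star_mul_star _) ?_ ?_).symm.symm
  · -- (s*t) * (t* s*) * (s*t) = s*t
    have hc : (t * star t) * (star s * s) = (star s * s) * (t * star t) :=
      idem_comm _ _ (idem_mul_star t) (idem_star_mul s)
    have h1 : s * ((t * star t) * ((star s * s) * t)) = s * t := by
      rw [← mul_assoc (t * star t), hc]
      rw [show s * ((star s * s) * (t * star t) * t) = (s * star s * s) * ((t * star t) * t)
        by simp only [mul_assoc], mul_star_mul]
      rw [show t * star t * t = t from mul_star_mul t]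
    calc s * t * (star t * star s) * (s * t)
        = s * ((t * star t) * ((star s * s) * t)) := by simp only [mul_assoc]
      _ = s * t := h1
  · -- (t* s*) * (s*t) * (t* s*) = t* s*
    have hc : (star s * s) * (t * star t) = (t * star t) * (star s * s) :=
      idem_comm _ _ (idem_star_mul s) (idem_mul_star t)
    have h1 : star t * ((star s * s) * ((t * star t) * star s)) = star t * star s := by
      rw [← mul_assoc (star s * s), hc]
      rw [show star t * ((t * star t) * (star s * s) * star s)
          = (star t * t * star t) * ((star s * s) * star s) by simp only [mul_assoc],
        star_mul_star]
      rw [show star s * s * star s = star s from star_mul_star s]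
    calc star t * star s * (s * t) * (star t * star s)
        = star t * ((star s * s) * ((t * star t) * star s)) := by simp only [mul_assoc]
      _ = star t * star s := h1

theorem is_star_idem {e : S} (he : e * e = e) : star e = e := by
  refine is_unique_inv e (star e) e (mul_star_mul e) (star_mul_star e) ?_ ?_ <;>
    rw [he, he]

theorem is_idem_mul {e f : S} (he : e * e = e) (hf : f * f = f) :
    (e * f) * (e * f) = e * f := by
  rw [show (e * f) * (e * f) = e * ((f * e) * f) by simp only [mul_assoc],
    ← idem_comm e f he hf,
    show e * (e * f * f) = (e * e) * (f * f) by simp only [mul_assoc], he, hf]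

theorem is_conj_idem {e : S} (r : S) (he : e * e = e) :
    (star r * e * r) * (star r * e * r) = star r * e * r := by
  have hc : e * (r * star r) = (r * star r) * e := idem_comm _ _ he (idem_mul_star r)
  calc (star r * e * r) * (star r * e * r)
      = star r * (e * (r * star r) * (e * r)) := by simp only [mul_assoc]
    _ = star r * ((r * star r) * e * (e * r)) := by rw [hc]
    _ = (star r * r * star r) * ((e * e) * r) := by simp only [mul_assoc]
    _ = star r * e * r := by rw [star_mul_star, he, ← mul_assoc]

theorem is_le_idem_mul {e : S} (r : S) (he : e * e = e) : ISle (e * r) r := by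
  unfold ISle
  rw [is_star_mul, is_star_idem he]
  have hc : e * (r * star r) = (r * star r) * e := idem_comm _ _ he (idem_mul_star r)
  calc r * (star r * e * (e * r)) = (r * star r) * ((e * e) * r) := by simp only [mul_assoc]
    _ = ((r * star r) * e) * r := by rw [he, ← mul_assoc]
    _ = (e * (r * star r)) * r := by rw [← hc]
    _ = e * r := by rw [mul_assoc, mul_assoc, ← mul_assoc r, mul_star_mul]

theorem germ_aux (s t e f : S) (he : e * e = e) (hf : f * f = f) :
    (s * t) * (star t * e * t * f) = (s * e) * (t * f) := by
  have hc : (t * star t) * e = e * (t * star t) := idem_comm _ _ (idem_mul_star t) he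
  calc (s * t) * (star t * e * t * f)
      = s * ((t * star t) * e * (t * f)) := by simp only [mul_assoc]
    _ = s * (e * (t * star t) * (t * f)) := by rw [hc]
    _ = (s * e) * ((t * star t * t) * f) := by simp only [mul_assoc]
    _ = (s * e) * (t * f) := by rw [mul_star_mul]

end InverseSemigroup

section AuxAnalysis
open InverseSemigroup

variable {S : Type*} [InverseSemigroup S]
variable {A : Type*} [NormedRing A] [StarRing A] [CStarRing A]
  [NormedAlgebra ℂ A] [StarModule ℂ A] [CompleteSpace A]
variable {X : Type*}
variable (𝓑 : FellBundle S A) (val : A → X → ℂ)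
variable (hval_add : ∀ {e : S} {a b : A}, e * e = e → a ∈ 𝓑.fib e → b ∈ 𝓑.fib e →
      ∀ x, val (a + b) x = val a x + val b x)
    (hval_smul : ∀ {e : S} {a : A} (c : ℂ), e * e = e → a ∈ 𝓑.fib e →
      ∀ x, val (c • a) x = c * val a x)
    (hval_mul : ∀ {e f : S} {a b : A}, e * e = e → f * f = f → a ∈ 𝓑.fib e → b ∈ 𝓑.fib f →
      ∀ x, val (a * b) x = val a x * val b x)
    (hval_star : ∀ {e : S} {a : A}, e * e = e → a ∈ 𝓑.fib e →
      ∀ x, val (star a) x = (starRingEnd ℂ) (val a x))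
    (hval_pos : ∀ {s : S} {a : A}, a ∈ 𝓑.fib s →
      ∀ x, (val (star a * a) x).im = 0 ∧ 0 ≤ (val (star a * a) x).re)

set_option linter.unusedSectionVars false
set_option linter.unusedVariables false

include hval_add hval_smul hval_mul hval_star hval_pos

theorem val_zero (e : S) (he : e * e = e) (x : X) : val (0 : A) x = 0 := by
  have h := hval_smul (0 : ℂ) he (Submodule.zero_mem (𝓑.fib e)) x
  simpa using h

theorem val_sub {e : S} {a b : A} (he : e * e = e) (ha : a ∈ 𝓑.fib e) (hb : b ∈ 𝓑.fib e)
    (x : X) : val (a - b) x = val a x - val b x := by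
  have h1 := hval_add he ha (Submodule.smul_mem (𝓑.fib e) (-1 : ℂ) hb) x
  have h2 := hval_smul (-1 : ℂ) he hb x
  rw [sub_eq_add_neg, ← neg_one_smul ℂ b, h1, h2]
  ring

theorem val_star_self {g : S} (hg : g * g = g) {m : A} (hm : m ∈ 𝓑.fib g) (y : X) :
    val (star m * m) y = (starRingEnd ℂ) (val m y) * val m y := by
  have hsm : star m ∈ 𝓑.fib g := by
    have := 𝓑.star_mem hm; rwa [is_star_idem hg] at this
  rw [hval_mul hg hg hsm hm y, hval_star hg hm y]

theorem val_split3 {g h : S} (hg : g * g = g) (hh : h * h = h) {m W : A}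
    (hm : m ∈ 𝓑.fib g) (hW : W ∈ 𝓑.fib h) (y : X) :
    val (star m * W * m) y = (starRingEnd ℂ) (val m y) * val W y * val m y := by
  have hsm : star m ∈ 𝓑.fib g := by
    have := 𝓑.star_mem hm; rwa [is_star_idem hg] at this
  have h1 : star m * W ∈ 𝓑.fib (g * h) := 𝓑.mul_mem hsm hW
  rw [hval_mul (is_idem_mul hg hh) hg h1 hm y, hval_mul hg hh hsm hW y, hval_star hg hm y]

theorem val_conj_sym {r : S} {u v : A} (hu : u ∈ 𝓑.fib r) (hv : v ∈ 𝓑.fib r) (y : X) :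
    val (star v * u) y = (starRingEnd ℂ) (val (star u * v) y) := by
  have hrr := idem_star_mul r
  have hmemuv : star u * v ∈ 𝓑.fib (star r * r) := 𝓑.mul_mem (𝓑.star_mem hu) hv
  have hkey : star v * u = star (star u * v) := by simp [star_mul]
  rw [hkey, hval_star hrr hmemuv y]

theorem CS0 {r : S} {u v : A} (hu : u ∈ 𝓑.fib r) (hv : v ∈ 𝓑.fib r) (y : X)
    (h0 : val (star u * u) y = 0) : val (star u * v) y = 0 := by
  by_contra hB
  set B := val (star u * v) y with hBdef
  have hrr : (star r * r) * (star r * r) = star r * r := idem_star_mul r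
  have hmemuu : star u * u ∈ 𝓑.fib (star r * r) := 𝓑.mul_mem (𝓑.star_mem hu) hu
  have hmemuv : star u * v ∈ 𝓑.fib (star r * r) := 𝓑.mul_mem (𝓑.star_mem hu) hv
  have hmemvu : star v * u ∈ 𝓑.fib (star r * r) := 𝓑.mul_mem (𝓑.star_mem hv) hu
  have hmemvv : star v * v ∈ 𝓑.fib (star r * r) := 𝓑.mul_mem (𝓑.star_mem hv) hv
  have hconj : val (star v * u) y = (starRingEnd ℂ) B :=
    val_conj_sym 𝓑 val hval_add hval_smul hval_mul hval_star hval_pos hu hv y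
  set q := val (star v * v) y with hqdef
  have hnB : 0 < Complex.normSq B := Complex.normSq_pos.mpr hB
  set k : ℝ := -(q.re + 1) / (2 * Complex.normSq B) with hk
  set l : ℂ := (k : ℂ) * B with hl
  set w : A := l • u + v with hwdef
  have hwmem : w ∈ 𝓑.fib r := Submodule.add_mem _ (Submodule.smul_mem _ _ hu) hv
  have hexp : star w * w
      = (l * (starRingEnd ℂ) l) • (star u * u)
        + (((starRingEnd ℂ) l) • (star u * v) + (l • (star v * u) + star v * v)) := by
    simp only [hwdef, star_add, star_smul, add_mul, mul_add, smul_mul_assoc, mul_smul_comm,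
      smul_smul, smul_add, starRingEnd_apply]
    abel
  have hm2 : ((starRingEnd ℂ) l) • (star u * v) + (l • (star v * u) + star v * v)
      ∈ 𝓑.fib (star r * r) :=
    Submodule.add_mem _ (Submodule.smul_mem _ _ hmemuv)
      (Submodule.add_mem _ (Submodule.smul_mem _ _ hmemvu) hmemvv)
  have hm3 : l • (star v * u) + star v * v ∈ 𝓑.fib (star r * r) :=
    Submodule.add_mem _ (Submodule.smul_mem _ _ hmemvu) hmemvv
  have hvalw : val (star w * w) y
      = (l * (starRingEnd ℂ) l) * val (star u * u) y
        + (((starRingEnd ℂ) l) * B + (l * ((starRingEnd ℂ) B) + q)) := by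
    rw [hexp, hval_add hrr (Submodule.smul_mem _ _ hmemuu) hm2 y,
      hval_smul _ hrr hmemuu y,
      hval_add hrr (Submodule.smul_mem _ _ hmemuv) hm3 y,
      hval_smul _ hrr hmemuv y,
      hval_add hrr (Submodule.smul_mem _ _ hmemvu) hmemvv y,
      hval_smul _ hrr hmemvu y, hconj, ← hBdef, ← hqdef]
  rw [h0, mul_zero, zero_add] at hvalw
  have hterm1 : (starRingEnd ℂ) l * B = ((k * Complex.normSq B : ℝ) : ℂ) := by
    rw [hl, map_mul, Complex.conj_ofReal, mul_assoc, mul_comm ((starRingEnd ℂ) B) B,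
      Complex.mul_conj]
    push_cast; ring
  have hterm2 : l * ((starRingEnd ℂ) B) = ((k * Complex.normSq B : ℝ) : ℂ) := by
    rw [hl, mul_assoc, Complex.mul_conj]
    push_cast; ring
  have hre : (val (star w * w) y).re = k * Complex.normSq B + (k * Complex.normSq B + q.re) := by
    rw [hvalw, hterm1, hterm2]
    simp [Complex.add_re, Complex.ofReal_re]
  have hpos := (hval_pos hwmem y).2
  rw [hre] at hpos
  have hkval : k * Complex.normSq B = -(q.re + 1) / 2 := by
    rw [hk]; field_simp
  rw [hkval] at hpos
  linarith

theorem val_expand4 {r : S} {u v : A} (hu : u ∈ 𝓑.fib r) (hv : v ∈ 𝓑.fib r) (y : X) :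
    val (star (u - v) * (u - v)) y
      = val (star u * u) y - val (star u * v) y
        - (val (star v * u) y - val (star v * v) y) := by
  have hrr := idem_star_mul r
  have huu : star u * u ∈ 𝓑.fib (star r * r) := 𝓑.mul_mem (𝓑.star_mem hu) hu
  have huv : star u * v ∈ 𝓑.fib (star r * r) := 𝓑.mul_mem (𝓑.star_mem hu) hv
  have hvu : star v * u ∈ 𝓑.fib (star r * r) := 𝓑.mul_mem (𝓑.star_mem hv) hu
  have hvv : star v * v ∈ 𝓑.fib (star r * r) := 𝓑.mul_mem (𝓑.star_mem hv) hv
  have key : star (u - v) * (u - v)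
      = (star u * u - star u * v) - (star v * u - star v * v) := by
    rw [star_sub, sub_mul, mul_sub, mul_sub]
  rw [key,
    val_sub 𝓑 val hval_add hval_smul hval_mul hval_star hval_pos hrr
      (Submodule.sub_mem _ huu huv) (Submodule.sub_mem _ hvu hvv) y,
    val_sub 𝓑 val hval_add hval_smul hval_mul hval_star hval_pos hrr huu huv y,
    val_sub 𝓑 val hval_add hval_smul hval_mul hval_star hval_pos hrr hvu hvv y]

theorem valEQ {r : S} {u v : A} (hu : u ∈ 𝓑.fib r) (hv : v ∈ 𝓑.fib r) (y : X)
    (h : val (star (u - v) * (u - v)) y = 0) :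
    val (star u * u) y = val (star v * v) y ∧ val (star u * v) y = val (star v * v) y ∧
      val (star v * u) y = val (star v * v) y := by
  have hrr := idem_star_mul r
  have hsub : u - v ∈ 𝓑.fib r := Submodule.sub_mem _ hu hv
  have huv : star u * v ∈ 𝓑.fib (star r * r) := 𝓑.mul_mem (𝓑.star_mem hu) hv
  have hvv : star v * v ∈ 𝓑.fib (star r * r) := 𝓑.mul_mem (𝓑.star_mem hv) hv
  have hvu : star v * u ∈ 𝓑.fib (star r * r) := 𝓑.mul_mem (𝓑.star_mem hv) hu
  have huu : star u * u ∈ 𝓑.fib (star r * r) := 𝓑.mul_mem (𝓑.star_mem hu) hu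
  have c1 : val (star (u - v) * v) y = 0 :=
    CS0 𝓑 val hval_add hval_smul hval_mul hval_star hval_pos hsub hv y h
  have c2 : val (star (u - v) * u) y = 0 :=
    CS0 𝓑 val hval_add hval_smul hval_mul hval_star hval_pos hsub hu y h
  have e1 : val (star u * v) y = val (star v * v) y := by
    have key : star (u - v) * v = star u * v - star v * v := by rw [star_sub, sub_mul]
    rw [key, val_sub 𝓑 val hval_add hval_smul hval_mul hval_star hval_pos hrr huv hvv y] at c1
    linear_combination c1
  have e2 : val (star u * u) y = val (star v * u) y := by
    have key : star (u - v) * u = star u * u - star v * u := by rw [star_sub, sub_mul]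
    rw [key, val_sub 𝓑 val hval_add hval_smul hval_mul hval_star hval_pos hrr huu hvu y] at c2
    linear_combination c2
  have e3 : val (star v * u) y = val (star v * v) y := by
    rw [val_conj_sym 𝓑 val hval_add hval_smul hval_mul hval_star hval_pos hu hv y, e1]
    have him : (val (star v * v) y).im = 0 := (hval_pos hv y).1
    exact Complex.conj_eq_iff_im.mpr him
  exact ⟨e2.trans e3, e1, e3⟩

theorem valTriangle {r : S} {p q : A} (hp : p ∈ 𝓑.fib r) (hq : q ∈ 𝓑.fib r) (y : X)
    (h0 : val (star p * p) y = 0) :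
    val (star (p + q) * (p + q)) y = val (star q * q) y := by
  have hrr := idem_star_mul r
  have hpp : star p * p ∈ 𝓑.fib (star r * r) := 𝓑.mul_mem (𝓑.star_mem hp) hp
  have hpq : star p * q ∈ 𝓑.fib (star r * r) := 𝓑.mul_mem (𝓑.star_mem hp) hq
  have hqp : star q * p ∈ 𝓑.fib (star r * r) := 𝓑.mul_mem (𝓑.star_mem hq) hp
  have hqq : star q * q ∈ 𝓑.fib (star r * r) := 𝓑.mul_mem (𝓑.star_mem hq) hq
  have key : star (p + q) * (p + q)
      = (star p * p + star p * q) + (star q * p + star q * q) := by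
    rw [star_add, add_mul, mul_add, mul_add]
  have c1 : val (star p * q) y = 0 :=
    CS0 𝓑 val hval_add hval_smul hval_mul hval_star hval_pos hp hq y h0
  have c2 : val (star q * p) y = 0 := by
    rw [val_conj_sym 𝓑 val hval_add hval_smul hval_mul hval_star hval_pos hp hq y, c1, map_zero]
  rw [key, hval_add hrr (Submodule.add_mem _ hpp hpq) (Submodule.add_mem _ hqp hqq) y,
    hval_add hrr hpp hpq y, hval_add hrr hqp hqq y, h0, c1, c2]
  ring

theorem NsubZero {r : S} {u v : A} (hu : u ∈ 𝓑.fib r) (hv : v ∈ 𝓑.fib r) (y : X)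
    (h1 : val (star u * u) y = 0) (h2 : val (star v * v) y = 0) :
    val (star (u - v) * (u - v)) y = 0 := by
  have hnv : -v ∈ 𝓑.fib r := Submodule.neg_mem _ hv
  have hnn : star (-v) * (-v) = star v * v := by simp
  have h2' : val (star (-v) * (-v)) y = 0 := by rw [hnn]; exact h2
  have := valTriangle 𝓑 val hval_add hval_smul hval_mul hval_star hval_pos hu hnv y h1
  rw [hnn] at this
  rw [sub_eq_add_neg]
  rw [this, h2]

theorem cross_comm {e f : S} (he : e * e = e) (hf : f * f = f) {p q : A}
    (hval_inj : ∀ {e : S} {a b : A}, e * e = e → a ∈ 𝓑.fib e → b ∈ 𝓑.fib e →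
      (∀ x, val a x = val b x) → a = b)
    (hp : p ∈ 𝓑.fib e) (hq : q ∈ 𝓑.fib f) : p * q = q * p := by
  have h1 : p * q ∈ 𝓑.fib (e * f) := 𝓑.mul_mem hp hq
  have h2 : q * p ∈ 𝓑.fib (e * f) := by
    have := 𝓑.mul_mem hq hp
    rwa [InverseSemigroup.idem_comm f e hf he] at this
  exact hval_inj (is_idem_mul he hf) h1 h2
    (fun x => by rw [hval_mul he hf hp hq x, hval_mul hf he hq hp x, mul_comm])

theorem char_bound {e : S} (he : e * e = e) {a : A} (ha : a ∈ 𝓑.fib e) (y : X) :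
    ‖val a y‖ ≤ ‖a‖ := by
  by_contra hlt
  push_neg at hlt
  have hne : val a y ≠ 0 := by
    intro h
    rw [h] at hlt
    simp only [norm_zero] at hlt
    exact absurd hlt (not_lt.mpr (norm_nonneg a))
  have habs : 0 < ‖val a y‖ := norm_pos_iff.mpr hne
  set z : A := (val a y)⁻¹ • a with hz
  have hzmem : z ∈ 𝓑.fib e := Submodule.smul_mem _ _ ha
  have hzval : val z y = 1 := by
    rw [hz, hval_smul _ he ha y, inv_mul_cancel₀ hne]
  have hznorm : ‖z‖ < 1 := by
    rw [hz, norm_smul, norm_inv, ← div_eq_inv_mul]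
    exact (div_lt_one habs).mpr hlt
  have hpow : ∀ n : ℕ, z ^ (n + 1) ∈ 𝓑.fib e := by
    intro n
    induction n with
    | zero => simpa [pow_one] using hzmem
    | succ n ih =>
        rw [pow_succ]
        have := 𝓑.mul_mem ih hzmem
        rwa [he] at this
  have hsum : Summable (fun n : ℕ => z ^ (n + 1)) := by
    apply Summable.of_norm
    have hgeo : Summable (fun n : ℕ => ‖z‖ ^ (n + 1)) := by
      simpa [pow_succ'] using
        (summable_geometric_of_lt_one (norm_nonneg z) hznorm).mul_left ‖z‖
    exact Summable.of_nonneg_of_le (fun n => norm_nonneg _)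
      (fun n => norm_pow_le' z (Nat.succ_pos n)) hgeo
  set c : A := ∑' n : ℕ, z ^ (n + 1) with hc
  have hcmem : c ∈ 𝓑.fib e := by
    refine (𝓑.isClosed_fib e).mem_of_tendsto hsum.hasSum.tendsto_sum_nat
      (Filter.Eventually.of_forall fun n => ?_)
    exact Submodule.sum_mem _ fun i _ => hpow i
  have hzc : z * c ∈ 𝓑.fib e := by
    have := 𝓑.mul_mem hzmem hcmem
    rwa [he] at this
  have hiden : c = z + z * c := by
    conv_lhs => rw [hc, hsum.tsum_eq_zero_add]
    rw [pow_one]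
    congr 1
    calc ∑' n : ℕ, z ^ (n + 1 + 1) = ∑' n : ℕ, z * z ^ (n + 1) := by
          apply tsum_congr; intro n; rw [← pow_succ']
      _ = z * c := Summable.tsum_mul_left z hsum
  have hcontr : val c y = 1 + val c y := by
    conv_lhs => rw [hiden]
    rw [hval_add he hzmem hzc y, hval_mul he he hzmem hcmem y, hzval, one_mul]
  simpa using hcontr

theorem exists_b0 (hsat : 𝓑.Saturated) (t : S) (y : X)
    (hy : y ∈ 𝓑.U val (star t * t)) :
    ∃ b₀ ∈ 𝓑.fib t, val (star b₀ * b₀) y ≠ 0 := by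
  by_contra hcon
  push_neg at hcon
  obtain ⟨w, hw, hwy⟩ := hy
  have hett := idem_star_mul t
  have hspan_le : Submodule.span ℂ {x : A | ∃ a ∈ 𝓑.fib (star t), ∃ b ∈ 𝓑.fib t, x = a * b}
      ≤ 𝓑.fib (star t * t) := by
    rw [Submodule.span_le]
    rintro _ ⟨p, hp, q, hq, rfl⟩
    exact 𝓑.mul_mem hp hq
  have hgen : ∀ v ∈ {x : A | ∃ a ∈ 𝓑.fib (star t), ∃ b ∈ 𝓑.fib t, x = a * b},
      val v y = 0 := by
    rintro _ ⟨p, hp, q, hq, rfl⟩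
    have hp' : star p ∈ 𝓑.fib t := by
      have := 𝓑.star_mem hp
      rwa [is_star_star] at this
    have h0 : val (star (star p) * (star p)) y = 0 := hcon (star p) hp'
    have := CS0 𝓑 val hval_add hval_smul hval_mul hval_star hval_pos hp' hq y h0
    rwa [star_star] at this
  have hvz : ∀ v ∈ Submodule.span ℂ {x : A | ∃ a ∈ 𝓑.fib (star t), ∃ b ∈ 𝓑.fib t, x = a * b},
      val v y = 0 := by
    intro v hv
    induction hv using Submodule.span_induction with
    | mem x hx => exact hgen x hx
    | zero => exact val_zero 𝓑 val hval_add hval_smul hval_mul hval_star hval_pos _ hett y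
    | add x x' hx hx' ihx ihx' =>
        rw [hval_add hett (hspan_le hx) (hspan_le hx') y, ihx, ihx', add_zero]
    | smul cc x hx ih => rw [hval_smul cc hett (hspan_le hx) y, ih, mul_zero]
  have hwcl : w ∈ closure (↑(Submodule.span ℂ
      {x : A | ∃ a ∈ 𝓑.fib (star t), ∃ b ∈ 𝓑.fib t, x = a * b}) : Set A) :=
    hsat (star t) t hw
  obtain ⟨v, hvmem, hdist⟩ := Metric.mem_closure_iff.mp hwcl (‖val w y‖)
    (norm_pos_iff.mpr hwy)
  have hvfib : v ∈ 𝓑.fib (star t * t) := hspan_le hvmem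
  have hv0 : val v y = 0 := hvz v hvmem
  have hb : ‖val (w - v) y‖ ≤ ‖w - v‖ :=
    char_bound 𝓑 val hval_add hval_smul hval_mul hval_star hval_pos hett
      (Submodule.sub_mem _ hw hvfib) y
  rw [val_sub 𝓑 val hval_add hval_smul hval_mul hval_star hval_pos hett hw hvfib y,
    hv0, sub_zero] at hb
  rw [dist_eq_norm] at hdist
  exact absurd (lt_of_le_of_lt hb hdist) (lt_irrefl _)

theorem theta_fix {Y : Type*} (val' : A → Y → ℂ) (θ : S → Y → Y)
    (hval_add' : ∀ {e : S} {a b : A}, e * e = e → a ∈ 𝓑.fib e → b ∈ 𝓑.fib e →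
      ∀ x, val' (a + b) x = val' a x + val' b x)
    (hval_mul' : ∀ {e f : S} {a b : A}, e * e = e → f * f = f → a ∈ 𝓑.fib e → b ∈ 𝓑.fib f →
      ∀ x, val' (a * b) x = val' a x * val' b x)
    (hval_star' : ∀ {e : S} {a : A}, e * e = e → a ∈ 𝓑.fib e →
      ∀ x, val' (star a) x = (starRingEnd ℂ) (val' a x))
    (hval_sep : ∀ x y : Y,
      (∀ (e : S) (b : A), e * e = e → b ∈ 𝓑.fib e → val' b x = val' b y) → x = y)
    (hθ : ∀ {s : S} {a : A}, a ∈ 𝓑.fib s → ∀ x : Y, 0 < (val' (star a * a) x).re →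
      ∀ {e : S} {b : A}, e * e = e → b ∈ 𝓑.fib e →
        val' (star a * b * a) x = val' (star a * a) x * val' b (θ s x))
    {e : S} (he : e * e = e) {y : Y} (hy : y ∈ 𝓑.U val' e) : θ e y = y := by
  obtain ⟨w, hw, hwy⟩ := hy
  have hsw : star w ∈ 𝓑.fib e := by
    have := 𝓑.star_mem hw
    rwa [is_star_idem he] at this
  have hww : val' (star w * w) y = (starRingEnd ℂ) (val' w y) * val' w y := by
    rw [hval_mul' he he hsw hw y, hval_star' he hw y]
  have hwnsq : val' (star w * w) y = (Complex.normSq (val' w y) : ℂ) := by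
    rw [hww, mul_comm, Complex.mul_conj]
  have hpos : 0 < (val' (star w * w) y).re := by
    rw [hwnsq, Complex.ofReal_re]
    exact Complex.normSq_pos.mpr hwy
  have hne : val' (star w * w) y ≠ 0 := by
    intro h
    rw [h] at hpos
    simp at hpos
  apply hval_sep
  intro f b hf hb
  have h1 := hθ hw y hpos hf hb
  have h2 : val' (star w * b * w) y = val' (star w * w) y * val' b y := by
    have hm1 : star w * b ∈ 𝓑.fib (e * f) := 𝓑.mul_mem hsw hb
    rw [hval_mul' (is_idem_mul he hf) he hm1 hw y, hval_mul' he hf hsw hb y, hww,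
      hval_star' he hw y]
    ring
  exact mul_left_cancel₀ hne (h1.symm.trans h2)

end AuxAnalysis


open InverseSemigroup in
/-- On the line bundle `L`, the multiplication
`[a,s,x] · [b,t,y] := [ab, st, y]`, defined when `θₜ(y) = x`, is well-defined
(independent of the chosen representatives), and satisfies
`‖[a,s,x]·[b,t,y]‖ = ‖[a,s,x]‖ ‖[b,t,y]‖`, where `‖[a,s,x]‖ = √((a*a)(x))`. -/
theorem stmt_16 (𝓑 : FellBundle S A) (hsat : 𝓑.Saturated) (hsab : 𝓑.SemiAbelian)
    {X : Type*} (val : A → X → ℂ)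
    (hval_add : ∀ {e : S} {a b : A}, e * e = e → a ∈ 𝓑.fib e → b ∈ 𝓑.fib e →
      ∀ x, val (a + b) x = val a x + val b x)
    (hval_smul : ∀ {e : S} {a : A} (c : ℂ), e * e = e → a ∈ 𝓑.fib e →
      ∀ x, val (c • a) x = c * val a x)
    (hval_mul : ∀ {e f : S} {a b : A}, e * e = e → f * f = f → a ∈ 𝓑.fib e → b ∈ 𝓑.fib f →
      ∀ x, val (a * b) x = val a x * val b x)
    (hval_star : ∀ {e : S} {a : A}, e * e = e → a ∈ 𝓑.fib e →
      ∀ x, val (star a) x = (starRingEnd ℂ) (val a x))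
    (hval_inj : ∀ {e : S} {a b : A}, e * e = e → a ∈ 𝓑.fib e → b ∈ 𝓑.fib e →
      (∀ x, val a x = val b x) → a = b)
    (hval_sep : ∀ x y : X,
      (∀ (e : S) (b : A), e * e = e → b ∈ 𝓑.fib e → val b x = val b y) → x = y)
    (hval_pos : ∀ {s : S} {a : A}, a ∈ 𝓑.fib s →
      ∀ x, (val (star a * a) x).im = 0 ∧ 0 ≤ (val (star a * a) x).re)
    (θ : S → X → X)
    (hθ : ∀ {s : S} {a : A}, a ∈ 𝓑.fib s → ∀ x : X, 0 < (val (star a * a) x).re →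
      ∀ {e : S} {b : A}, e * e = e → b ∈ 𝓑.fib e →
        val (star a * b * a) x = val (star a * a) x * val b (θ s x))
    (hθ_val : ∀ {s : S} {a : A}, a ∈ 𝓑.fib s → ∀ x ∈ 𝓑.U val (star s * s),
      val (a * star a) (θ s x) = val (star a * a) x)
    (hθ_maps : ∀ s : S, Set.MapsTo (θ s) (𝓑.U val (star s * s)) (𝓑.U val (s * star s)))
    (hθ_comp : ∀ s t : S, ∀ x ∈ 𝓑.U val (star (s * t) * (s * t)), θ s (θ t x) = θ (s * t) x)
    {s s' t t' : S} {a a' b b' : A} {x y : X}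
    (ha : a ∈ 𝓑.fib s) (ha' : a' ∈ 𝓑.fib s') (hb : b ∈ 𝓑.fib t) (hb' : b' ∈ 𝓑.fib t')
    (hx : x ∈ 𝓑.U val (star s * s)) (hy : y ∈ 𝓑.U val (star t * t))
    (hmatch : θ t y = x)
    (h₁ : germRelTrip 𝓑 val (a, s, x) (a', s', x))
    (h₂ : germRelTrip 𝓑 val (b, t, y) (b', t', y)) :
    germRelTrip 𝓑 val (a * b, s * t, y) (a' * b', s' * t', y) ∧
    Real.sqrt (val (star (a * b) * (a * b)) y).re =
      Real.sqrt (val (star a * a) x).re * Real.sqrt (val (star b * b) y).re := by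
  classical
  obtain ⟨-, e, c, he, hc, hcx, hse, hP⟩ := h₁
  obtain ⟨-, f, d, hf, hd, hdy, htf2, hQ⟩ := h₂
  have hconj_ne : ∀ z : ℂ, z ≠ 0 → (starRingEnd ℂ) z ≠ 0 :=
    fun z hz h => hz (by simpa using congrArg (starRingEnd ℂ) h)
  dsimp only at hcx hse hP hdy htf2 hQ
  have hett : (star t * t) * (star t * t) = star t * t := idem_star_mul t
  have hess : (star s * s) * (star s * s) = star s * s := idem_star_mul s
  have hconjte : (star t * e * t) * (star t * e * t) = star t * e * t := is_conj_idem t he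
  have hG : ((star t * e * t) * f) * ((star t * e * t) * f) = (star t * e * t) * f :=
    is_idem_mul hconjte hf
  have hgermA : (s * t) * (star t * e * t * f) = (s * e) * (t * f) := germ_aux s t e f he hf
  have hcomm_f : (star t * e * t) * f = f * (star t * e * t) := idem_comm _ _ hconjte hf
  have hgermB : (s' * t') * (star t * e * t * f) = (s * e) * (t * f) := by
    calc (s' * t') * (star t * e * t * f) = (s' * t') * (f * (star t * e * t)) := by
          rw [hcomm_f]
      _ = s' * ((t' * f) * (star t * e * t)) := by simp only [mul_assoc]
      _ = s' * ((t * f) * (star t * e * t)) := by rw [← htf2]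
      _ = (s' * t) * (f * (star t * e * t)) := by simp only [mul_assoc]
      _ = (s' * t) * (star t * e * t * f) := by rw [← hcomm_f]
      _ = (s' * e) * (t * f) := germ_aux s' t e f he hf
      _ = (s * e) * (t * f) := by rw [← hse]
  have hgerm : (s * t) * (star t * e * t * f) = (s' * t') * (star t * e * t * f) :=
    hgermA.trans hgermB.symm
  have hfixf : θ f y = y :=
    theta_fix 𝓑 val hval_add hval_smul hval_mul hval_star hval_pos val θ hval_add hval_mul hval_star hval_sep hθ hf ⟨d, hd, hdy⟩
  have hUtf : y ∈ 𝓑.U val (star (t * f) * (t * f)) := by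
    obtain ⟨w, hw, hwy⟩ := hy
    have hsd : star d ∈ 𝓑.fib f := by
      have := 𝓑.star_mem hd; rwa [is_star_idem hf] at this
    have hmem : star d * w * d ∈ 𝓑.fib ((f * (star t * t)) * f) :=
      𝓑.mul_mem (𝓑.mul_mem hsd hw) hd
    have hidx : (f * (star t * t)) * f = star (t * f) * (t * f) := by
      rw [is_star_mul, is_star_idem hf]; simp only [mul_assoc]
    rw [hidx] at hmem
    refine ⟨star d * w * d, hmem, ?_⟩
    rw [val_split3 𝓑 val hval_add hval_smul hval_mul hval_star hval_pos hf hett hd hw y]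
    exact mul_ne_zero (mul_ne_zero (hconj_ne _ hdy) hwy) hdy
  have hxeq : θ (t * f) y = x := by
    have h0 := hθ_comp t f y hUtf
    rw [hfixf] at h0
    rw [← h0, hmatch]
  rcases lt_or_eq_of_le (hval_pos hb y).2 with hβpos | hβzero
  · -- CASE A : 0 < (val (star b * b) y).re
    have hβne : val (star b * b) y ≠ 0 := by
      intro h; rw [h] at hβpos; simp at hβpos
    have hm₀ : star b * c * b ∈ 𝓑.fib (star t * e * t) :=
      𝓑.mul_mem (𝓑.mul_mem (𝓑.star_mem hb) hc) hb
    set m : A := star b * c * b * d with hm_def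
    have hm : m ∈ 𝓑.fib ((star t * e * t) * f) := by
      rw [hm_def]; exact 𝓑.mul_mem hm₀ hd
    have hbval : val (star b * c * b) y = val (star b * b) y * val c x := by
      have h0 := hθ hb y hβpos he hc
      rw [hmatch] at h0; exact h0
    have hmy : val m y ≠ 0 := by
      rw [hm_def, hval_mul hconjte hf hm₀ hd y, hbval]
      exact mul_ne_zero (mul_ne_zero hβne hcx) hdy
    have hbd : b * d ∈ 𝓑.fib (t * f) := 𝓑.mul_mem hb hd
    have hsbb : star b * b ∈ 𝓑.fib (star t * t) := 𝓑.mul_mem (𝓑.star_mem hb) hb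
    have hκval : val (star (b * d) * (b * d)) y
        = (starRingEnd ℂ) (val d y) * val (star b * b) y * val d y := by
      have hκkey : star (b * d) * (b * d) = star d * (star b * b) * d := by
        simp only [star_mul, mul_assoc]
      rw [hκkey, val_split3 𝓑 val hval_add hval_smul hval_mul hval_star hval_pos hf hett hd hsbb y]
    have hκre : 0 < (val (star (b * d) * (b * d)) y).re := by
      have h2 : val (star (b * d) * (b * d)) y
          = val (star b * b) y * (Complex.normSq (val d y) : ℂ) := by
        rw [hκval, mul_comm ((starRingEnd ℂ) (val d y)) (val (star b * b) y), mul_assoc,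
          mul_comm ((starRingEnd ℂ) (val d y)) (val d y), Complex.mul_conj]
      rw [h2, Complex.mul_re, Complex.ofReal_re, Complex.ofReal_im, mul_zero, sub_zero]
      exact mul_pos hβpos (Complex.normSq_pos.mpr hdy)
    have hbb : b * star b ∈ 𝓑.fib (t * star t) := 𝓑.mul_mem hb (𝓑.star_mem hb)
    have hbbc_comm : (b * star b) * c = c * (b * star b) :=
      cross_comm 𝓑 val hval_add hval_smul hval_mul hval_star hval_pos (idem_mul_star t) he hval_inj hbb hc
    have hctil : b * star b * c ∈ 𝓑.fib ((t * star t) * e) := 𝓑.mul_mem hbb hc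
    have hcomm_tte : (t * star t) * e = e * (t * star t) := idem_comm _ _ (idem_mul_star t) he
    have hρ' : s' * (t * star t * e) = s * (t * star t * e) := by
      calc s' * (t * star t * e) = s' * (e * (t * star t)) := by rw [hcomm_tte]
        _ = (s' * e) * (t * star t) := by rw [← mul_assoc]
        _ = (s * e) * (t * star t) := by rw [← hse]
        _ = s * (e * (t * star t)) := by rw [mul_assoc]
        _ = s * (t * star t * e) := by rw [← hcomm_tte]
    have hactil : a * (b * star b * c) = (a * c) * (b * star b) := by
      rw [hbbc_comm, ← mul_assoc]
    have ha'ctil : a' * (b * star b * c) = (a' * c) * (b * star b) := by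
      rw [hbbc_comm, ← mul_assoc]
    have hacm : a * c ∈ 𝓑.fib (s * e) := 𝓑.mul_mem ha hc
    have ha'cm : a' * c ∈ 𝓑.fib (s * e) := by
      have h0 := 𝓑.mul_mem ha' hc; rwa [← hse] at h0
    have hp₀ : a * c - a' * c ∈ 𝓑.fib (s * e) := Submodule.sub_mem _ hacm ha'cm
    have hp₀p₀ : star (a * c - a' * c) * (a * c - a' * c)
        ∈ 𝓑.fib (star (s * e) * (s * e)) := 𝓑.mul_mem (𝓑.star_mem hp₀) hp₀
    have hNx : val (star (a * (b * star b * c) - a' * (b * star b * c))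
        * (a * (b * star b * c) - a' * (b * star b * c))) x = 0 := by
      rw [hactil, ha'ctil, ← sub_mul]
      have key : star ((a * c - a' * c) * (b * star b)) * ((a * c - a' * c) * (b * star b))
          = star (b * star b) * (star (a * c - a' * c) * (a * c - a' * c)) * (b * star b) := by
        simp only [star_mul, mul_assoc]
      rw [key, val_split3 𝓑 val hval_add hval_smul hval_mul hval_star hval_pos (idem_mul_star t) (idem_star_mul (s * e)) hbb hp₀p₀ x, hP]
      ring
    have hu0 : a * (b * star b * c) ∈ 𝓑.fib (s * ((t * star t) * e)) := 𝓑.mul_mem ha hctil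
    have hv0 : a' * (b * star b * c) ∈ 𝓑.fib (s * ((t * star t) * e)) := by
      have h0 := 𝓑.mul_mem ha' hctil; rwa [hρ'] at h0
    obtain ⟨hEuuvv, hEuvvv, hEvuvv⟩ := valEQ 𝓑 val hval_add hval_smul hval_mul hval_star hval_pos hu0 hv0 x hNx
    have hKEY : ∀ (a₁ a₂ : A) (s₁ s₂ : S), a₁ ∈ 𝓑.fib s₁ → a₂ ∈ 𝓑.fib s₂ →
        s₁ * (t * star t * e) = s * (t * star t * e) →
        s₂ * (t * star t * e) = s * (t * star t * e) →
        val (star (a₁ * (b * m)) * (a₂ * (b * m))) y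
          = val (star (b * d) * (b * d)) y
            * val (star (a₁ * (b * star b * c)) * (a₂ * (b * star b * c))) x := by
      intro a₁ a₂ s₁ s₂ ha₁ ha₂ hs₁ hs₂
      have m1 : a₁ * (b * star b * c) ∈ 𝓑.fib (s * (t * star t * e)) := by
        have h0 := 𝓑.mul_mem ha₁ hctil; rwa [hs₁] at h0
      have m2 : a₂ * (b * star b * c) ∈ 𝓑.fib (s * (t * star t * e)) := by
        have h0 := 𝓑.mul_mem ha₂ hctil; rwa [hs₂] at h0
      have hM : star (a₁ * (b * star b * c)) * (a₂ * (b * star b * c))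
          ∈ 𝓑.fib (star (s * (t * star t * e)) * (s * (t * star t * e))) :=
        𝓑.mul_mem (𝓑.star_mem m1) m2
      have key : star (a₁ * (b * m)) * (a₂ * (b * m))
          = star (b * d) * (star (a₁ * (b * star b * c)) * (a₂ * (b * star b * c)))
            * (b * d) := by
        rw [hm_def]; simp only [star_mul, star_star, mul_assoc]
      rw [key, hθ hbd y hκre (idem_star_mul (s * (t * star t * e))) hM, hxeq]
    have hV11 := hKEY a a s s ha ha rfl rfl
    have hV12 := hKEY a a' s s' ha ha' rfl hρ'
    have hV21 := hKEY a' a s' s ha' ha hρ' rfl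
    have hV22 := hKEY a' a' s' s' ha' ha' hρ' hρ'
    rw [hEuuvv] at hV11
    rw [hEuvvv] at hV12
    rw [hEvuvv] at hV21
    have hGmem_bm : b * m ∈ 𝓑.fib (t * ((star t * e * t) * f)) := 𝓑.mul_mem hb hm
    have hstG : s' * (t * ((star t * e * t) * f)) = s * (t * ((star t * e * t) * f)) := by
      have e1 : (s' * t) * ((star t * e * t) * f) = (s' * e) * (t * f) := germ_aux s' t e f he hf
      have e2 : (s * t) * ((star t * e * t) * f) = (s * e) * (t * f) := germ_aux s t e f he hf
      rw [show s' * (t * ((star t * e * t) * f)) = (s' * t) * ((star t * e * t) * f) from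
          (mul_assoc _ _ _).symm,
        show s * (t * ((star t * e * t) * f)) = (s * t) * ((star t * e * t) * f) from
          (mul_assoc _ _ _).symm, e1, e2, ← hse]
    have hu1 : a * (b * m) ∈ 𝓑.fib (s * (t * ((star t * e * t) * f))) :=
      𝓑.mul_mem ha hGmem_bm
    have hw1 : a' * (b * m) ∈ 𝓑.fib (s * (t * ((star t * e * t) * f))) := by
      have h0 := 𝓑.mul_mem ha' hGmem_bm; rwa [hstG] at h0
    have hstep1 : val (star (a * (b * m) - a' * (b * m))
        * (a * (b * m) - a' * (b * m))) y = 0 := by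
      rw [val_expand4 𝓑 val hval_add hval_smul hval_mul hval_star hval_pos hu1 hw1 y, hV11, hV12, hV21, hV22]
      ring
    have hm₀d : (star b * c * b) * d = d * (star b * c * b) :=
      cross_comm 𝓑 val hval_add hval_smul hval_mul hval_star hval_pos hconjte hf hval_inj hm₀ hd
    have hbm2 : b * m = (b * d) * (star b * c * b) := by
      rw [hm_def, hm₀d, ← mul_assoc]
    have hb'm2 : b' * m = (b' * d) * (star b * c * b) := by
      rw [hm_def, hm₀d, ← mul_assoc]
    have hb'd : b' * d ∈ 𝓑.fib (t * f) := by
      have h0 := 𝓑.mul_mem hb' hd; rwa [← htf2] at h0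
    have hqdiff : b * d - b' * d ∈ 𝓑.fib (t * f) := Submodule.sub_mem _ hbd hb'd
    have hstep2expr : a' * (b * m) - a' * (b' * m)
        = a' * ((b * d - b' * d) * (star b * c * b)) := by
      rw [hbm2, hb'm2, ← mul_sub, ← sub_mul]
    have hvq : (star a' * a') * (b * d - b' * d) ∈ 𝓑.fib (t * f) := by
      have h1 : (star a' * a') * (b * d - b' * d) ∈ 𝓑.fib ((star s' * s') * (t * f)) :=
        𝓑.mul_mem (𝓑.mul_mem (𝓑.star_mem ha') ha') hqdiff
      exact 𝓑.incl (is_le_idem_mul (t * f) (idem_star_mul s')) h1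
    have hcs2 : val (star (b * d - b' * d) * ((star a' * a') * (b * d - b' * d))) y = 0 :=
      CS0 𝓑 val hval_add hval_smul hval_mul hval_star hval_pos hqdiff hvq y hQ
    have hW0 : val (star (b * d - b' * d) * (star a' * a') * (b * d - b' * d)) y = 0 := by
      rw [mul_assoc]; exact hcs2
    have hWmem : star (b * d - b' * d) * (star a' * a') * (b * d - b' * d)
        ∈ 𝓑.fib (star (t * f) * (star s' * s') * (t * f)) :=
      𝓑.mul_mem (𝓑.mul_mem (𝓑.star_mem hqdiff) (𝓑.mul_mem (𝓑.star_mem ha') ha')) hqdiff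
    have hstep2 : val (star (a' * (b * m) - a' * (b' * m))
        * (a' * (b * m) - a' * (b' * m))) y = 0 := by
      rw [hstep2expr]
      have key : star (a' * ((b * d - b' * d) * (star b * c * b)))
            * (a' * ((b * d - b' * d) * (star b * c * b)))
          = star (star b * c * b)
              * (star (b * d - b' * d) * (star a' * a') * (b * d - b' * d))
              * (star b * c * b) := by
        simp only [star_mul, star_star, mul_assoc]
      rw [key, val_split3 𝓑 val hval_add hval_smul hval_mul hval_star hval_pos hconjte (is_conj_idem (t * f) (idem_star_mul s'))
        hm₀ hWmem y, hW0]
      ring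
    have hv1 : a' * (b' * m) ∈ 𝓑.fib (s * (t * ((star t * e * t) * f))) := by
      have h0 : a' * (b' * m) ∈ 𝓑.fib (s' * (t' * ((star t * e * t) * f))) :=
        𝓑.mul_mem ha' (𝓑.mul_mem hb' hm)
      have hidx : s' * (t' * ((star t * e * t) * f)) = s * (t * ((star t * e * t) * f)) := by
        rw [show s' * (t' * ((star t * e * t) * f)) = (s' * t') * ((star t * e * t) * f) from
            (mul_assoc _ _ _).symm,
          show s * (t * ((star t * e * t) * f)) = (s * t) * ((star t * e * t) * f) from
            (mul_assoc _ _ _).symm]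
        exact hgerm.symm
      rwa [hidx] at h0
    have htri := valTriangle 𝓑 val hval_add hval_smul hval_mul hval_star hval_pos (Submodule.sub_mem _ hu1 hw1)
      (Submodule.sub_mem _ hw1 hv1) y hstep1
    rw [sub_add_sub_cancel] at htri
    have hN : val (star (a * (b * m) - a' * (b' * m))
        * (a * (b * m) - a' * (b' * m))) y = 0 := htri.trans hstep2
    refine ⟨⟨rfl, (star t * e * t) * f, m, hG, hm, hmy, hgerm, ?_⟩, ?_⟩
    · rw [mul_assoc a b m, mul_assoc a' b' m]
      exact hN
    · have key : star (a * b) * (a * b) = star b * (star a * a) * b := by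
        simp only [star_mul, mul_assoc]
      have hθn := hθ hb y hβpos hess (𝓑.mul_mem (𝓑.star_mem ha) ha)
      rw [hmatch] at hθn
      rw [key, hθn, Complex.mul_re, (hval_pos hb y).1, zero_mul, sub_zero,
        mul_comm ((val (star b * b) y).re), Real.sqrt_mul (hval_pos ha x).2]
  · -- CASE B : 0 = (val (star b * b) y).re
    have hβ0 : val (star b * b) y = 0 := by
      apply Complex.ext
      · rw [Complex.zero_re]; exact hβzero.symm
      · rw [Complex.zero_im]; exact (hval_pos hb y).1
    obtain ⟨b₀, hb₀, hb₀y⟩ := exists_b0 𝓑 val hval_add hval_smul hval_mul hval_star hval_pos hsat t y hy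
    have hβ₀pos : 0 < (val (star b₀ * b₀) y).re := by
      rcases lt_or_eq_of_le (hval_pos hb₀ y).2 with h | h
      · exact h
      · exfalso
        apply hb₀y
        apply Complex.ext
        · rw [Complex.zero_re]; exact h.symm
        · rw [Complex.zero_im]; exact (hval_pos hb₀ y).1
    have hm₀ : star b₀ * c * b₀ ∈ 𝓑.fib (star t * e * t) :=
      𝓑.mul_mem (𝓑.mul_mem (𝓑.star_mem hb₀) hc) hb₀
    set m : A := star b₀ * c * b₀ * d with hm_def
    have hm : m ∈ 𝓑.fib ((star t * e * t) * f) := by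
      rw [hm_def]; exact 𝓑.mul_mem hm₀ hd
    have hmy : val m y ≠ 0 := by
      have hbval : val (star b₀ * c * b₀) y = val (star b₀ * b₀) y * val c x := by
        have h0 := hθ hb₀ y hβ₀pos he hc
        rw [hmatch] at h0; exact h0
      rw [hm_def, hval_mul hconjte hf hm₀ hd y, hbval]
      exact mul_ne_zero (mul_ne_zero hb₀y hcx) hdy
    have hb'd : b' * d ∈ 𝓑.fib (t * f) := by
      have h0 := 𝓑.mul_mem hb' hd; rwa [← htf2] at h0
    have hbd : b * d ∈ 𝓑.fib (t * f) := 𝓑.mul_mem hb hd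
    obtain ⟨hEQ1, -, -⟩ := valEQ 𝓑 val hval_add hval_smul hval_mul hval_star hval_pos hbd hb'd y hQ
    have hL : val (star (b * d) * (b * d)) y = 0 := by
      have key : star (b * d) * (b * d) = star d * (star b * b) * d := by
        simp only [star_mul, mul_assoc]
      rw [key, val_split3 𝓑 val hval_add hval_smul hval_mul hval_star hval_pos hf hett hd (𝓑.mul_mem (𝓑.star_mem hb) hb) y, hβ0]
      ring
    have hR : val (star (b' * d) * (b' * d)) y
        = (starRingEnd ℂ) (val d y) * val (star b' * b') y * val d y := by
      have key : star (b' * d) * (b' * d) = star d * (star b' * b') * d := by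
        simp only [star_mul, mul_assoc]
      rw [key, val_split3 𝓑 val hval_add hval_smul hval_mul hval_star hval_pos hf (idem_star_mul t') hd
        (𝓑.mul_mem (𝓑.star_mem hb') hb') y]
    have hb'0 : val (star b' * b') y = 0 := by
      have h0 : (starRingEnd ℂ) (val d y) * val (star b' * b') y * val d y = 0 := by
        rw [← hR, ← hEQ1, hL]
      rcases mul_eq_zero.mp h0 with h1 | h1
      · rcases mul_eq_zero.mp h1 with h2 | h2
        · exact absurd h2 (hconj_ne _ hdy)
        · exact h2
      · exact absurd h1 hdy
    have hGbm : b * m ∈ 𝓑.fib (t * ((star t * e * t) * f)) := 𝓑.mul_mem hb hm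
    have hNu : val (star (a * b * m) * (a * b * m)) y = 0 := by
      have key : star (a * b * m) * (a * b * m)
          = star (b * m) * ((star a * a) * (b * m)) := by
        simp only [star_mul, mul_assoc]
      have h0 : val (star (b * m) * (b * m)) y = 0 := by
        have key2 : star (b * m) * (b * m) = star m * (star b * b) * m := by
          simp only [star_mul, mul_assoc]
        rw [key2, val_split3 𝓑 val hval_add hval_smul hval_mul hval_star hval_pos hG hett hm (𝓑.mul_mem (𝓑.star_mem hb) hb) y, hβ0]
        ring
      have hv2 : (star a * a) * (b * m) ∈ 𝓑.fib (t * ((star t * e * t) * f)) := by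
        have h1 := 𝓑.mul_mem (𝓑.mul_mem (𝓑.star_mem ha) ha) hGbm
        exact 𝓑.incl (is_le_idem_mul _ (idem_star_mul s)) h1
      rw [key]
      exact CS0 𝓑 val hval_add hval_smul hval_mul hval_star hval_pos hGbm hv2 y h0
    have hGb'm : b' * m ∈ 𝓑.fib (t' * ((star t * e * t) * f)) := 𝓑.mul_mem hb' hm
    have hNv : val (star (a' * b' * m) * (a' * b' * m)) y = 0 := by
      have key : star (a' * b' * m) * (a' * b' * m)
          = star (b' * m) * ((star a' * a') * (b' * m)) := by
        simp only [star_mul, mul_assoc]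
      have h0 : val (star (b' * m) * (b' * m)) y = 0 := by
        have key2 : star (b' * m) * (b' * m) = star m * (star b' * b') * m := by
          simp only [star_mul, mul_assoc]
        rw [key2, val_split3 𝓑 val hval_add hval_smul hval_mul hval_star hval_pos hG (idem_star_mul t') hm
          (𝓑.mul_mem (𝓑.star_mem hb') hb') y, hb'0]
        ring
      have hv2 : (star a' * a') * (b' * m) ∈ 𝓑.fib (t' * ((star t * e * t) * f)) := by
        have h1 := 𝓑.mul_mem (𝓑.mul_mem (𝓑.star_mem ha') ha') hGb'm
        exact 𝓑.incl (is_le_idem_mul _ (idem_star_mul s')) h1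
      rw [key]
      exact CS0 𝓑 val hval_add hval_smul hval_mul hval_star hval_pos hGb'm hv2 y h0
    have hu : a * b * m ∈ 𝓑.fib ((s * t) * ((star t * e * t) * f)) :=
      𝓑.mul_mem (𝓑.mul_mem ha hb) hm
    have hv : a' * b' * m ∈ 𝓑.fib ((s * t) * ((star t * e * t) * f)) := by
      have h0 := 𝓑.mul_mem (𝓑.mul_mem ha' hb') hm
      rwa [← hgerm] at h0
    have hN := NsubZero 𝓑 val hval_add hval_smul hval_mul hval_star hval_pos hu hv y hNu hNv
    refine ⟨⟨rfl, (star t * e * t) * f, m, hG, hm, hmy, hgerm, hN⟩, ?_⟩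
    have key2 : star (a * b) * (a * b) = star b * ((star a * a) * b) := by
      simp only [star_mul, mul_assoc]
    have hv2 : (star a * a) * b ∈ 𝓑.fib t := by
      have h1 := 𝓑.mul_mem (𝓑.mul_mem (𝓑.star_mem ha) ha) hb
      exact 𝓑.incl (is_le_idem_mul _ (idem_star_mul s)) h1
    have hcs := CS0 𝓑 val hval_add hval_smul hval_mul hval_star hval_pos hb hv2 y hβ0
    rw [key2, hcs, Complex.zero_re, Real.sqrt_zero, ← hβzero, Real.sqrt_zero, mul_zero]
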